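/- arXiv:1704.06478 — 2 statements merged into one kernel-verified Lean document; each statement's English description precedes it below -/
import Mathlib

section
/- The duality relation for multiple zeta values: for a word w in letters e_0, e_1 starting with e_1 and ending with e_0, the iterated integral L(w) = I(0;w;1) satisfies L(w) = L(τ(w)), where τ is the anti-automorphism of the free algebra on e_0,e_1 with τ(e_0) = −e_1 and τ(e_1) = −e_0 (so L(w − τ(w)) = 0). -/
open scoped BigOperators
open MeasureTheory Filter

noncomputable section

/-- Iterated integral over the open simplex `0 < t₁ < ⋯ < t_m < 1` of `∏ᵢ 1/(tᵢ - aᵢ)`. -/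
def itInt (a : List ℂ) : ℂ :=
  ∫ t in {t : Fin a.length → ℝ | StrictMono t ∧ ∀ i, t i ∈ Set.Ioo (0:ℝ) 1},
    ∏ i : Fin a.length, ((t i : ℂ) - a.get i)⁻¹

/-- Multiple zeta value attached to a list of exponents. -/
def mzv (k : List ℕ) : ℝ :=
  ∑' f : {f : Fin k.length → ℕ+ // StrictMono f},
    ∏ i : Fin k.length, (((f.1 i : ℕ) : ℝ) ^ (k.get i))⁻¹

/-- Letters: `0 ↦ e₀`, `1 ↦ e₁`, `2 ↦ e_z`. -/
abbrev Ltr := Fin 3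

/-- The free noncommutative algebra `ℚ⟨e₀,e₁,e_z⟩` realized as a monoid algebra. -/
abbrev Alg := MonoidAlgebra ℚ (FreeMonoid Ltr)

/-- The word (monomial) corresponding to a list of letters. -/
def wd (l : List Ltr) : Alg := MonoidAlgebra.of ℚ (FreeMonoid Ltr) (FreeMonoid.ofList l)

/-- Padded letter sequence: `a₀ = 0`, `a_{n+1} = 1`. -/
def pad (l : List Ltr) : ℕ → Ltr := fun i => (((0:Ltr) :: (l ++ [1])).getD i 0)

/-- Unordered-pair Kronecker delta. -/
def dl (a b c d : Ltr) : ℚ := if (a = c ∧ b = d) ∨ (a = d ∧ b = c) then 1 else 0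

/-- `∂_{z,b}` on a single word. -/
def delWord (b : Ltr) (l : List Ltr) : Alg :=
  ∑ i ∈ Finset.range l.length,
    (dl (pad l (i+1)) (pad l (i+2)) 2 b - dl (pad l i) (pad l (i+1)) 2 b) •
      wd (l.eraseIdx i)

/-- The linear operator `∂_{z,b}` on `ℚ⟨e₀,e₁,e_z⟩`. -/
def del (b : Ltr) : Alg →ₗ[ℚ] Alg :=
  Finsupp.lift Alg ℚ (FreeMonoid Ltr) (fun l => delWord b (FreeMonoid.toList l))
    ∘ₗ (MonoidAlgebra.coeffLinearEquiv ℚ).toLinearMap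

/-- Evaluation of letters at a point `z`. -/
def ev (z : ℂ) : Ltr → ℂ := fun i => if i = 0 then 0 else if i = 1 then 1 else z

/-- The linear map `L` (depending on `z`) given by iterated integrals. -/
def LL (z : ℂ) : Alg →ₗ[ℚ] ℂ :=
  Finsupp.lift ℂ ℚ (FreeMonoid Ltr) (fun l => itInt ((FreeMonoid.toList l).map (ev z)))
    ∘ₗ (MonoidAlgebra.coeffLinearEquiv ℚ).toLinearMap

/-- `A_n = (e₁e₀)^n`. -/
def Aw : ℕ → List Ltr
  | 0 => []
  | n+1 => 1 :: 0 :: Aw n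

/-- `B_n = (e₁e₀)^n e₁`. -/
def Bw (n : ℕ) : List Ltr := Aw n ++ [1]

/-- `Ā_n = (e₀e₁)^n`. -/
def Abar : ℕ → List Ltr
  | 0 => []
  | n+1 => 0 :: 1 :: Abar n

/-- `B̄_n = (e₀e₁)^n e₀`. -/
def Bbar (n : ℕ) : List Ltr := Abar n ++ [0]

/-- The single letter `e_z`. -/
def ezw : List Ltr := [2]

/-- Flip `e₀ ↔ e₁` (fixing `e_z`, which never occurs in duality words). -/
def flipL : Ltr → Ltr := fun i => if i = 0 then 1 else if i = 1 then 0 else 2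

/-- The duality anti-automorphism `τ` as a linear map. -/
def tau : Alg →ₗ[ℚ] Alg :=
  Finsupp.lift Alg ℚ (FreeMonoid Ltr)
    (fun l => ((-1 : ℚ) ^ (FreeMonoid.toList l).length) •
      wd (((FreeMonoid.toList l).reverse).map flipL))
    ∘ₗ (MonoidAlgebra.coeffLinearEquiv ℚ).toLinearMap

/-- `Δ(w) = w - τ(w)`. -/
def Del (x : Alg) : Alg := x - tau x

/-- The segment `[0,1] ⊂ ℂ`. -/
def seg : Set ℂ := (fun t : ℝ => (t : ℂ)) '' Set.Icc 0 1

/-- Admissibility of a word: it is empty, or starts with `e₁` or `e_z`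
and ends with `e₀` or `e_z`. -/
def adm (l : List Ltr) : Prop :=
  ∀ h : l ≠ [], (l.head h = 1 ∨ l.head h = 2) ∧ (l.getLast h = 0 ∨ l.getLast h = 2)

/-- The subspace `𝒜¹` spanned by admissible words. -/
def A1 : Submodule ℚ Alg := Submodule.span ℚ {x | ∃ l, adm l ∧ x = wd l}

/-- The span of words containing the letter `e_z` (the ideal `ℐ = 𝒜e_z𝒜`). -/
def Iz : Submodule ℚ Alg := Submodule.span ℚ {x | ∃ l : List Ltr, (2:Ltr) ∈ l ∧ x = wd l}

/-- `F_{ee}(m,n)`. -/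
def Fee (s : ℕ) (m n : ℤ) : Alg :=
  if m < 0 ∨ n < 0 then 0 else
  wd (Aw s ++ Bbar m.toNat ++ ezw ++ Aw n.toNat)
    + wd (Aw m.toNat ++ ezw ++ Aw s ++ ezw ++ Aw n.toNat)
    + wd (Aw m.toNat ++ ezw ++ Abar s ++ ezw ++ Aw n.toNat)
    + wd (Aw m.toNat ++ ezw ++ Bw n.toNat ++ Aw s)
    - wd (Bw (s + m.toNat) ++ ezw ++ Aw n.toNat)
    - wd (Aw m.toNat ++ ezw ++ Bbar (s + n.toNat))

/-- `F_{oe}(m,n)`. -/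
def Foe (s : ℕ) (m n : ℤ) : Alg :=
  if m < 0 ∨ n < 0 then 0 else
  wd (Aw s ++ Abar (m.toNat + 1) ++ ezw ++ Aw n.toNat)
    + wd (Bw m.toNat ++ ezw ++ Aw s ++ ezw ++ Aw n.toNat)
    + wd (Bw m.toNat ++ ezw ++ Abar s ++ ezw ++ Aw n.toNat)
    + wd (Bw m.toNat ++ ezw ++ Bw n.toNat ++ Aw s)
    - wd (Aw (s + m.toNat + 1) ++ ezw ++ Aw n.toNat)
    - wd (Bw m.toNat ++ ezw ++ Bbar (s + n.toNat))

/-- `F_{eo}(m,n)`. -/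
def Feo (s : ℕ) (m n : ℤ) : Alg :=
  if m < 0 ∨ n < 0 then 0 else
  wd (Aw s ++ Bbar m.toNat ++ ezw ++ Bbar n.toNat)
    + wd (Aw m.toNat ++ ezw ++ Aw s ++ ezw ++ Bbar n.toNat)
    + wd (Aw m.toNat ++ ezw ++ Abar s ++ ezw ++ Bbar n.toNat)
    + wd (Aw m.toNat ++ ezw ++ Abar (n.toNat + 1) ++ Aw s)
    - wd (Bw (s + m.toNat) ++ ezw ++ Bbar n.toNat)
    - wd (Aw m.toNat ++ ezw ++ Aw (s + n.toNat + 1))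

/-- `F_{oo}(m,n)`. -/
def Foo (s : ℕ) (m n : ℤ) : Alg :=
  if m < 0 ∨ n < 0 then 0 else
  wd (Aw s ++ Abar (m.toNat + 1) ++ ezw ++ Bbar n.toNat)
    + wd (Bw m.toNat ++ ezw ++ Aw s ++ ezw ++ Bbar n.toNat)
    + wd (Bw m.toNat ++ ezw ++ Abar s ++ ezw ++ Bbar n.toNat)
    + wd (Bw m.toNat ++ ezw ++ Abar (n.toNat + 1) ++ Aw s)
    - wd (Aw (s + m.toNat + 1) ++ ezw ++ Bbar n.toNat)
    - wd (Bw m.toNat ++ ezw ++ Aw (s + n.toNat + 1))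

/-- Evaluation of a two-letter alphabet: `0 ↦ 0`, `1 ↦ 1`. -/
def ev2 : Fin 2 → ℂ := fun i => if i = 0 then 0 else 1

/-- Flip `e₀ ↔ e₁`. -/
def flip2 : Fin 2 → Fin 2 := fun i => if i = 0 then 1 else 0

def Jint (n : ℕ) (b : Fin n → ℂ) : ℂ :=
  ∫ t in {t : Fin n → ℝ | StrictMono t ∧ ∀ i, t i ∈ Set.Ioo (0:ℝ) 1},
    ∏ i : Fin n, ((t i : ℂ) - b i)⁻¹

def subME : ℝ ≃ᵐ ℝ :=
{ toEquiv := Equiv.subLeft (1:ℝ)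
  measurable_toFun := (measurable_const.sub measurable_id : Measurable fun x : ℝ => 1 - x)
  measurable_invFun := by
    simpa [Equiv.subLeft] using (show Measurable fun x : ℝ => -x + 1 by fun_prop) }

lemma Jint_congr {n n' : ℕ} (h : n = n') (b : Fin n → ℂ) (b' : Fin n' → ℂ)
    (hb : ∀ i : Fin n', b' i = b (Fin.cast h.symm i)) : Jint n b = Jint n' b' := by
  subst h
  congr 1
  exact (funext fun i => (hb i).symm)

lemma Jint_rev (n : ℕ) (b : Fin n → ℂ) :
    Jint n b = (-1 : ℂ) ^ n * Jint n (fun i => 1 - b (Fin.rev i)) := by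
  classical
  set S : Set (Fin n → ℝ) := {t | StrictMono t ∧ ∀ i, t i ∈ Set.Ioo (0:ℝ) 1} with hS
  let φ : (Fin n → ℝ) ≃ᵐ (Fin n → ℝ) := MeasurableEquiv.arrowCongr' (Fin.revPerm) subME
  have hφ : MeasurePreserving φ volume volume :=
    volume_preserving_arrowCongr' _ _ (Measure.measurePreserving_sub_left volume 1)
  have hφapp : ∀ (t : Fin n → ℝ) (i : Fin n), φ t i = 1 - t (Fin.rev i) := by
    intro t i
    simp [φ, MeasurableEquiv.arrowCongr', Equiv.arrowCongr', Equiv.arrowCongr, subME,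
      Equiv.subLeft]
  have hpre : φ ⁻¹' S = S := by
    have key : ∀ t : Fin n → ℝ, t ∈ S → φ t ∈ S := by
      intro t ht
      refine ⟨fun i j hij => ?_, fun i => ?_⟩
      · rw [hφapp, hφapp]
        have : Fin.rev j < Fin.rev i := by simpa using Fin.rev_lt_rev.mpr hij
        exact sub_lt_sub_left (ht.1 this) 1
      · rw [hφapp]
        have := ht.2 (Fin.rev i)
        constructor <;> [linarith [this.2]; linarith [this.1]]
    have hinv : ∀ t : Fin n → ℝ, φ (φ t) = t := by
      intro t; funext i; rw [hφapp, hφapp, Fin.rev_rev]; ring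
    ext t
    constructor
    · intro ht
      have := key (φ t) ht
      rwa [hinv t] at this
    · intro ht; exact key t ht
  have hemb : MeasurableEmbedding φ := φ.measurableEmbedding
  have := hφ.setIntegral_preimage_emb hemb
    (fun t : Fin n → ℝ => ∏ i : Fin n, ((t i : ℂ) - b i)⁻¹) S
  rw [Jint, ← this, hpre]
  rw [show ((-1 : ℂ) ^ n * Jint n (fun i => 1 - b (Fin.rev i)))
      = ∫ t in S, (-1 : ℂ) ^ n * ∏ i : Fin n, ((t i : ℂ) - (1 - b (Fin.rev i)))⁻¹ from
    (integral_const_mul _ _).symm]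
  refine setIntegral_congr_fun ?_ (fun t _ => ?_)
  · have h1 : S = {t : Fin n → ℝ | ∀ i j : Fin n, i < j → t i < t j} ∩
        ⋂ i, {t | t i ∈ Set.Ioo (0:ℝ) 1} := by
      ext t; simp [hS, StrictMono, Set.mem_iInter]
    rw [h1]
    refine MeasurableSet.inter ?_ (MeasurableSet.iInter fun i =>
      measurableSet_Ioo.preimage (measurable_pi_apply i))
    have h2 : {t : Fin n → ℝ | ∀ i j : Fin n, i < j → t i < t j}
        = ⋂ i, ⋂ j, ⋂ (_ : i < j), {t | t i < t j} := by
      ext t; simp [Set.mem_iInter]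
    rw [h2]
    exact .iInter fun i => .iInter fun j => .iInter fun _ =>
      measurableSet_lt (measurable_pi_apply i) (measurable_pi_apply j)
  · -- pointwise identity
    have : ∀ i : Fin n, ((φ t i : ℝ) : ℂ) - b i
        = (-1) * ((t (Fin.rev i) : ℂ) - (1 - b i)) := by
      intro i; rw [hφapp]; push_cast; ring
    calc ∏ i : Fin n, ((φ t i : ℂ) - b i)⁻¹
        = ∏ i : Fin n, ((-1 : ℂ) * ((t (Fin.rev i) : ℂ) - (1 - b i)))⁻¹ := by
          exact Finset.prod_congr rfl (fun i _ => by rw [this i])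
      _ = ∏ i : Fin n, ((-1 : ℂ)⁻¹ * ((t (Fin.rev i) : ℂ) - (1 - b i))⁻¹) :=
          Finset.prod_congr rfl (fun i _ => mul_inv _ _)
      _ = (-1 : ℂ) ^ n * ∏ i : Fin n, ((t (Fin.rev i) : ℂ) - (1 - b i))⁻¹ := by
          rw [Finset.prod_mul_distrib, Finset.prod_const, Finset.card_univ, Fintype.card_fin,
            inv_neg_one]
      _ = (-1 : ℂ) ^ n * ∏ i : Fin n, ((t i : ℂ) - (1 - b (Fin.rev i)))⁻¹ := by
          congr 1
          have := Equiv.prod_comp (Fin.revPerm : Equiv.Perm (Fin n))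
            (fun j => ((t j : ℂ) - (1 - b (Fin.rev j)))⁻¹)
          simpa [Fin.rev_rev] using this


lemma itInt_eq_Jint (a : List ℂ) : itInt a = Jint a.length a.get := rfl

lemma ev2_flip (c : Fin 2) : (1 : ℂ) - ev2 c = ev2 (flip2 c) := by
  fin_cases c <;> simp [ev2, flip2]

/-- Duality: `L(w) = L(τ(w))`, i.e. `L(w) = (-1)^m L(reversed, flipped w)`. -/
theorem duality (l : List (Fin 2)) (h : l ≠ []) (hhead : l.head h = 1)
    (hlast : l.getLast h = 0) :
    itInt (l.map ev2) = (-1) ^ l.length * itInt ((l.reverse.map flip2).map ev2) := by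
  have h1 : itInt (l.map ev2) = Jint l.length (fun i => ev2 (l.get i)) := by
    rw [itInt_eq_Jint]
    exact Jint_congr (List.length_map _) _ _
      (fun i => by simp [List.get_eq_getElem, List.getElem_map])
  have h2 : itInt ((l.reverse.map flip2).map ev2)
      = Jint l.length (fun i => ev2 (flip2 (l.get (Fin.rev i)))) := by
    rw [itInt_eq_Jint]
    refine Jint_congr (by simp) _ _ (fun i => ?_)
    simp only [List.get_eq_getElem, List.getElem_map, List.getElem_reverse, Fin.val_rev,
      Fin.coe_cast]
    have e : l.length - 1 - (i:ℕ) = l.length - ((i:ℕ)+1) := by omega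
    simp [e]
  rw [h1, h2, Jint_rev]
  simp only [ev2_flip]


end
end

section
/- Fix s ≥ 1. With A_n = (e_1e_0)^n, B_n = (e_1e_0)^n e_1, Ā_n = (e_0e_1)^n, B̄_n = (e_0e_1)^n e_0, and F_{ee}, F_{oe}, F_{eo}, F_{oo} as defined below, for all m,n ≥ 0 the identity ∂_{z,0} F_{ee}(m,n) = F_{oe}(m−1,n) − Δ(A_s B̄_{m+n}) holds in ℚ⟨e_0,e_1,e_z⟩, where Δ(w) = w − τ(w), τ is the anti-automorphism with τ(e_0) = −e_1, τ(e_1) = −e_0, and F_{oe}(−1,n) := 0. -/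
open scoped BigOperators
open MeasureTheory Filter

noncomputable section

lemma wd_append (u v : List Ltr) : wd (u ++ v) = wd u * wd v := by
  simp [wd, ← map_mul]

lemma del_wd (b : Ltr) (l : List Ltr) : del b (wd l) = delWord b l := by
  simp only [del, wd, MonoidAlgebra.of_apply]
  erw [Finsupp.lift_apply, Finsupp.sum_single_index] <;> simp
lemma wd_nil : wd [] = 1 := rfl

lemma pad_mem : ∀ (l : List Ltr) (j : ℕ), pad l j = 2 → (2:Ltr) ∈ l := by
  intro l
  induction l with
  | nil =>
    intro j h
    rcases j with _ | _ | j <;> revert h <;> simp [pad, List.getD]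
  | cons a l ih =>
    intro j h
    rcases j with _ | _ | j
    · exact absurd h (by simp [pad])
    · have : a = 2 := h
      simp [this]
    · have : pad l (j+1) = 2 := h
      simp [ih _ this]

lemma pad_ne_two {l : List Ltr} (h : (2:Ltr) ∉ l) (j : ℕ) : pad l j ≠ 2 :=
  fun hj => h (pad_mem l j hj)
lemma delWord_nil : delWord 0 [] = 0 := by simp [delWord]

lemma pad_cons_succ_succ (a : Ltr) (l : List Ltr) (i : ℕ) :
    pad (a :: l) (i+2) = pad l (i+1) := rfl

lemma consGen (a : Ltr) (l : List Ltr)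
    (h : dl a (pad l 1) 2 0 = dl 0 (pad l 1) 2 0) :
    delWord 0 (a :: l) =
      (dl a (pad l 1) 2 0 - dl 0 a 2 0) • wd l + wd [a] * delWord 0 l := by
  rw [delWord, List.length_cons, Finset.sum_range_succ']
  have h0 : (dl (pad (a::l) (0+1)) (pad (a::l) (0+2)) 2 0
      - dl (pad (a::l) 0) (pad (a::l) (0+1)) 2 0) • wd ((a::l).eraseIdx 0)
      = (dl a (pad l 1) 2 0 - dl 0 a 2 0) • wd l := rfl
  rw [h0, add_comm]
  congr 1
  rw [delWord, Finset.mul_sum]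
  refine Finset.sum_congr rfl (fun i _ => ?_)
  have hw : wd [a] * wd (l.eraseIdx i) = wd (a :: l.eraseIdx i) := (wd_append [a] _).symm
  rw [mul_smul_comm, hw]
  have he : (a :: l).eraseIdx (i+1) = a :: l.eraseIdx i := rfl
  rw [he]
  congr 1
  rcases i with _ | j
  · show dl (pad l 1) (pad l 2) 2 0 - dl a (pad l 1) 2 0
        = dl (pad l 1) (pad l 2) 2 0 - dl (pad l 0) (pad l 1) 2 0
    rw [h]; rfl
  · rfl
lemma dl_one_left (x : Ltr) : dl 1 x 2 0 = 0 := by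
  fin_cases x <;> rfl

lemma dl_zero_left (x : Ltr) : dl 0 x 2 0 = if x = 2 then 1 else 0 := by
  fin_cases x <;> rfl

lemma dl_two_left (x : Ltr) : dl 2 x 2 0 = if x = 0 then 1 else 0 := by
  fin_cases x <;> rfl

lemma cons0 (l : List Ltr) : delWord 0 ((0:Ltr) :: l) =
    (if pad l 1 = 2 then (1:ℚ) else 0) • wd l + wd [0] * delWord 0 l := by
  have := consGen 0 l rfl
  rw [dl_zero_left, dl_zero_left] at this
  simpa using this

lemma cons1 (l : List Ltr) (h : pad l 1 ≠ 2) :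
    delWord 0 ((1:Ltr) :: l) = wd [1] * delWord 0 l := by
  have := consGen 1 l (by rw [dl_one_left, dl_zero_left, if_neg h])
  rw [dl_one_left, dl_zero_left] at this
  simpa using this

lemma consZ1 (l : List Ltr) (h : pad l 1 = 1) :
    delWord 0 ((2:Ltr) :: l) = -(wd l) + wd [2] * delWord 0 l := by
  have := consGen 2 l (by rw [h, dl_two_left, dl_zero_left]; simp)
  rw [h, dl_two_left, dl_zero_left] at this
  simpa using this
lemma dl_no2 {x y : Ltr} (hx : x ≠ 2) (hy : y ≠ 2) : dl x y 2 0 = 0 := by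
  rw [dl, if_neg]
  rintro (⟨h1, _⟩ | ⟨_, h2⟩)
  · exact hx h1
  · exact hy h2

lemma delNoZ {l : List Ltr} (h : (2:Ltr) ∉ l) : delWord 0 l = 0 := by
  rw [delWord]
  apply Finset.sum_eq_zero
  intro i _
  rw [dl_no2 (pad_ne_two h _) (pad_ne_two h _),
      dl_no2 (pad_ne_two h _) (pad_ne_two h _), sub_self, zero_smul]

lemma consZ0 (l : List Ltr) (h : pad l 1 ≠ 2) :
    delWord 0 ((2:Ltr) :: (0:Ltr) :: l) = -(wd (2 :: l)) + wd [2,0] * delWord 0 l := by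
  rw [delWord, List.length_cons, List.length_cons, Finset.sum_range_succ',
      Finset.sum_range_succ']
  have h0 : (dl (pad (2::0::l) (0+1)) (pad (2::0::l) (0+2)) 2 0
      - dl (pad (2::0::l) 0) (pad (2::0::l) (0+1)) 2 0) • wd ((2::0::l).eraseIdx 0)
      = ((1:ℚ) - 1) • wd (0 :: l) := by
    show (dl 2 0 2 0 - dl 0 2 2 0) • wd (0 :: l) = _
    rw [dl_two_left, dl_zero_left]; simp
  have h1 : (dl (pad (2::0::l) (0+1+1)) (pad (2::0::l) (0+1+2)) 2 0
      - dl (pad (2::0::l) (0+1)) (pad (2::0::l) (0+1+1)) 2 0) • wd ((2::0::l).eraseIdx 1)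
      = -(wd (2 :: l)) := by
    show (dl 0 (pad l 1) 2 0 - dl 2 0 2 0) • wd (2 :: l) = _
    rw [dl_two_left, dl_zero_left, if_neg h]; simp
  rw [h0, h1]
  simp only [sub_self, zero_smul, add_zero]
  rw [add_comm (-(wd (2 :: l))) (wd [2,0] * delWord 0 l)]
  congr 1
  rw [delWord, Finset.mul_sum]
  refine Finset.sum_congr rfl (fun i _ => ?_)
  have hw : wd [2,0] * wd (l.eraseIdx i) = wd (2 :: 0 :: l.eraseIdx i) :=
    (wd_append [2,0] _).symm
  rw [mul_smul_comm, hw]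
  have he : (2::0::l).eraseIdx (i+1+1) = 2 :: 0 :: l.eraseIdx i := rfl
  rw [he]
  congr 1
lemma delOneTwo {l : List Ltr} (h2 : (2:Ltr) ∉ l) (h : pad l 1 = 1) :
    delWord 0 ((1:Ltr) :: (2:Ltr) :: l) = 0 := by
  rw [delWord]
  apply Finset.sum_eq_zero
  intro i _
  rcases i with _ | _ | _ | j
  · show (dl 1 2 2 0 - dl 0 1 2 0) • wd _ = 0
    rw [dl_one_left, dl_zero_left]; simp
  · show (dl 2 (pad l 1) 2 0 - dl 1 2 2 0) • wd _ = 0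
    rw [h, dl_one_left, dl_two_left]; simp
  · show (dl (pad l 1) (pad l 2) 2 0 - dl 2 (pad l 1) 2 0) • wd _ = 0
    rw [h, dl_one_left, dl_two_left]; simp
  · show (dl (pad l (j+2)) (pad l (j+3)) 2 0 - dl (pad l (j+1)) (pad l (j+2)) 2 0) • wd _ = 0
    rw [dl_no2 (pad_ne_two h2 _) (pad_ne_two h2 _),
        dl_no2 (pad_ne_two h2 _) (pad_ne_two h2 _)]
    simp

lemma Aw_add (a b : ℕ) : Aw (a + b) = Aw a ++ Aw b := by
  induction a with
  | zero => simp [Aw]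
  | succ a ih =>
    have : a + 1 + b = (a + b) + 1 := by omega
    rw [this]
    show (1:Ltr) :: 0 :: Aw (a+b) = (1 :: 0 :: Aw a) ++ Aw b
    rw [ih]; rfl

lemma Bbar_cons (k : ℕ) : Bbar k = (0:Ltr) :: Aw k := by
  induction k with
  | zero => rfl
  | succ k ih =>
    show (0:Ltr) :: 1 :: (Abar k ++ [0]) = 0 :: 1 :: 0 :: Aw k
    rw [show Abar k ++ [(0:Ltr)] = Bbar k from rfl, ih]

lemma Bw_cons (k : ℕ) : Bw k = (1:Ltr) :: Abar k := by
  induction k with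
  | zero => rfl
  | succ k ih =>
    show (1:Ltr) :: 0 :: (Aw k ++ [1]) = 1 :: 0 :: 1 :: Abar k
    rw [show Aw k ++ [(1:Ltr)] = Bw k from rfl, ih]

lemma pad_Aw_one (k : ℕ) (l : List Ltr) (h : pad l 1 ≠ 2) :
    pad (Aw k ++ l) 1 ≠ 2 := by
  cases k with
  | zero => exact h
  | succ k => exact fun hc => absurd (show (1:Ltr) = 2 from hc) (by decide)

lemma two_not_mem_Aw (k : ℕ) : (2:Ltr) ∉ Aw k := by
  induction k with
  | zero => simp [Aw]
  | succ k ih => simp [Aw, ih]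

lemma delAw_safe (k : ℕ) (l : List Ltr) (h : pad l 1 ≠ 2) :
    delWord 0 (Aw k ++ l) = wd (Aw k) * delWord 0 l := by
  induction k with
  | zero => show delWord 0 l = wd [] * delWord 0 l; rw [wd_nil, one_mul]
  | succ k ih =>
    show delWord 0 ((1:Ltr) :: (0:Ltr) :: (Aw k ++ l)) = _
    rw [cons1 ((0:Ltr) :: (Aw k ++ l)) (fun hc => absurd (show (0:Ltr) = 2 from hc) (by decide)), cons0,
        if_neg (pad_Aw_one k l h), zero_smul, zero_add, ih]
    show wd [1] * (wd [0] * (wd (Aw k) * delWord 0 l)) = wd (Aw (k+1)) * delWord 0 l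
    rw [← mul_assoc, ← mul_assoc, ← wd_append, ← wd_append]
    rfl
lemma pad_two_cons (l : List Ltr) : pad ((2:Ltr) :: l) 1 = 2 := rfl

lemma pad_Bbar_head (m : ℕ) (l : List Ltr) : pad (Bbar m ++ l) 1 = 0 := by
  cases m with
  | zero => rfl
  | succ m => rfl

lemma pad_cons_ne (a : Ltr) (ha : a ≠ 2) (l : List Ltr) : ¬ pad (a :: l) 1 = 2 :=
  fun hc => ha hc

lemma delAw_z_succ (k : ℕ) (l : List Ltr) :
    delWord 0 (Aw (k+1) ++ (2:Ltr) :: l) =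
      wd (Bw k) * wd (2 :: l) + wd (Aw (k+1)) * delWord 0 (2 :: l) := by
  induction k with
  | zero =>
    show delWord 0 ((1:Ltr) :: (0:Ltr) :: (2:Ltr) :: l) = _
    rw [cons1 ((0:Ltr) :: (2:Ltr) :: l) (pad_cons_ne 0 (by decide) _),
      cons0, if_pos (pad_two_cons l), one_smul, mul_add, ← mul_assoc,
      show wd [(1:Ltr)] * wd [0] = wd (Aw 1) from (wd_append [1] [0]).symm]
    rfl
  | succ k ih =>
    show delWord 0 ((1:Ltr) :: (0:Ltr) :: (Aw (k+1) ++ 2 :: l)) = _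
    have hne : ¬ pad (Aw (k+1) ++ (2:Ltr) :: l) 1 = 2 := pad_cons_ne 1 (by decide) _
    rw [cons1 ((0:Ltr) :: (Aw (k+1) ++ 2 :: l)) (pad_cons_ne 0 (by decide) _),
      cons0, if_neg hne, zero_smul, zero_add, ih]
    simp only [mul_add, ← mul_assoc, ← wd_append]
    rfl

lemma delBbar_z (m : ℕ) (l : List Ltr) :
    delWord 0 (Bbar m ++ (2:Ltr) :: l) =
      wd (Abar m) * wd (2 :: l) + wd (Bbar m) * delWord 0 (2 :: l) := by
  induction m with
  | zero =>
    show delWord 0 ((0:Ltr) :: (2:Ltr) :: l) = _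
    rw [cons0, if_pos (pad_two_cons l), one_smul]
    show wd (2 :: l) + wd [0] * delWord 0 (2 :: l) = _
    rw [show Abar 0 = ([] : List Ltr) from rfl, wd_nil, one_mul]
    rfl
  | succ m ih =>
    show delWord 0 ((0:Ltr) :: (1:Ltr) :: (Bbar m ++ 2 :: l)) = _
    rw [cons0, if_neg (pad_cons_ne 1 (by decide) (Bbar m ++ 2 :: l)),
      zero_smul, zero_add,
      cons1 (Bbar m ++ 2 :: l)
        (fun hc => absurd ((pad_Bbar_head m _).symm.trans hc) (by decide)),
      ih]
    simp only [mul_add, ← mul_assoc, ← wd_append]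
    rfl
lemma Aw_app (a b : ℕ) : Aw a ++ Aw b = Aw (a+b) := (Aw_add a b).symm

lemma Bbar_add (a b : ℕ) : Bbar a ++ Aw b = Bbar (a+b) := by
  rw [Bbar_cons, Bbar_cons]
  show (0:Ltr) :: (Aw a ++ Aw b) = _
  rw [Aw_app]

lemma Bw_add (a b : ℕ) : Aw a ++ Bw b = Bw (a+b) := by
  show Aw a ++ (Aw b ++ [1]) = Aw (a+b) ++ [1]
  rw [← List.append_assoc, Aw_app]

lemma Abar_succ (k : ℕ) : Abar (k+1) = (0:Ltr) :: Bw k := by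
  rw [Bw_cons]; rfl

lemma two_not_mem_Abar (k : ℕ) : (2:Ltr) ∉ Abar k := by
  induction k with
  | zero => simp [Abar]
  | succ k ih => simp [Abar, ih]

lemma two_not_mem_Bw (k : ℕ) : (2:Ltr) ∉ Bw k := by
  rw [Bw_cons]
  simp [two_not_mem_Abar k]

lemma pad_Aw_head (k : ℕ) : pad (Aw k) 1 = 1 := by
  cases k with
  | zero => rfl
  | succ k => rfl

lemma pad_Aw_app_head (k : ℕ) (l : List Ltr) : pad (Aw (k+1) ++ l) 1 = 1 := rfl

lemma pad_Bw_head (k : ℕ) (l : List Ltr) : pad (Bw k ++ l) 1 = 1 := by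
  cases k with
  | zero => rfl
  | succ k => rfl

lemma len_Aw (k : ℕ) : (Aw k).length = 2*k := by
  induction k with
  | zero => rfl
  | succ k ih => simp [Aw, ih]; omega

lemma revflip_Aw (k : ℕ) : (Aw k).reverse.map flipL = Aw k := by
  induction k with
  | zero => rfl
  | succ k ih =>
    show ((1:Ltr) :: 0 :: Aw k).reverse.map flipL = Aw (k+1)
    rw [List.reverse_cons, List.reverse_cons, List.map_append, List.map_append, ih,
        List.append_assoc, Aw_add k 1]
    rfl

lemma tau_wd (l : List Ltr) : tau (wd l) =
    ((-1:ℚ)^l.length) • wd (l.reverse.map flipL) := by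
  simp only [tau, wd, MonoidAlgebra.of_apply]
  erw [Finsupp.lift_apply, Finsupp.sum_single_index] <;> simp

lemma tau_AB (s K : ℕ) : tau (wd (Aw s ++ Bbar K)) = -(wd (Bw K ++ Aw s)) := by
  rw [tau_wd, List.reverse_append, List.map_append, revflip_Aw, Bbar_cons,
      List.reverse_cons, List.map_append, revflip_Aw]
  have hlen : (Aw s ++ (0:Ltr) :: Aw K).length = 2*(s+K)+1 := by
    simp [len_Aw]; omega
  rw [hlen, Odd.neg_one_pow ⟨s+K, by ring⟩]
  have : ((List.map flipL [(0:Ltr)]) : List Ltr) = [1] := rfl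
  rw [this]
  show (-1 : ℚ) • wd ((Aw K ++ [1]) ++ Aw s) = _
  rw [neg_smul, one_smul]
  rfl
lemma not_mem_app {u v : List Ltr} (hu : (2:Ltr) ∉ u) (hv : (2:Ltr) ∉ v) :
    (2:Ltr) ∉ u ++ v := by
  intro h
  rcases List.mem_append.mp h with h | h
  · exact hu h
  · exact hv h

lemma Bw_app (k : ℕ) (l : List Ltr) : Bw k ++ l = Aw k ++ ((1:Ltr) :: l) := by
  show (Aw k ++ [1]) ++ l = _
  rw [List.append_assoc]
  rfl

lemma delBwZ (k : ℕ) (N : ℕ) : delWord 0 (Bw k ++ (2:Ltr) :: Aw N) = 0 := by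
  rw [Bw_app, delAw_safe k _ (pad_cons_ne 1 (by decide) _),
     delOneTwo (two_not_mem_Aw N) (pad_Aw_head N), mul_zero]

lemma delZAw (N : ℕ) : delWord 0 ((2:Ltr) :: Aw N) = -(wd (Aw N)) := by
  rw [consZ1 (Aw N) (pad_Aw_head N), delNoZ (two_not_mem_Aw N), mul_zero, add_zero]

lemma delZ0Aw (k : ℕ) : delWord 0 ((2:Ltr) :: (0:Ltr) :: Aw k) = -(wd (2 :: Aw k)) := by
  rw [consZ0 (Aw k) (by rw [pad_Aw_head]; decide), delNoZ (two_not_mem_Aw k),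
      mul_zero, add_zero]
/-- `∂_{z,0} F_{ee}(m,n) = F_{oe}(m-1,n) - Δ(A_s B̄_{m+n})`. -/
theorem del0_Fee (s : ℕ) (hs : 1 ≤ s) (m n : ℤ) (hm : 0 ≤ m) (hn : 0 ≤ n) :
    del 0 (Fee s m n) = Foe s (m - 1) n - Del (wd (Aw s ++ Bbar (m + n).toNat)) := by
  obtain ⟨S, rfl⟩ : ∃ S, s = S + 1 := ⟨s - 1, by omega⟩
  obtain ⟨M, rfl⟩ : ∃ M : ℕ, m = (M:ℤ) := ⟨m.toNat, by omega⟩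
  obtain ⟨N, rfl⟩ : ∃ N : ℕ, n = (N:ℤ) := ⟨n.toNat, by omega⟩
  have hM : ((M:ℤ)).toNat = M := by omega
  have hN : ((N:ℤ)).toNat = N := by omega
  have hMN : (((M:ℤ)) + N).toNat = M + N := by omega
  rw [Fee, if_neg (by omega), hM, hN, hMN, Del, tau_AB, sub_neg_eq_add]
  simp only [map_add, map_sub, del_wd]
  simp only [ezw, List.append_assoc, List.cons_append, List.nil_append]
  rcases M with _ | M
  · rw [Foe, if_pos (by omega)]
    simp only [Nat.zero_add, Nat.add_zero, show Aw 0 = ([]:List Ltr) from rfl,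
      List.nil_append]
    rw [delAw_safe (S+1) (Bbar 0 ++ 2 :: Aw N) (by rw [pad_Bbar_head]; decide),
        delBbar_z 0 (Aw N), delZAw N,
        consZ1 (Aw (S+1) ++ 2 :: Aw N) (pad_Aw_app_head S _),
        delAw_z_succ S (Aw N), delZAw N,
        show Abar (S+1) ++ (2:Ltr) :: Aw N = (0:Ltr) :: (Bw S ++ 2 :: Aw N) by
          rw [Abar_succ]; rfl,
        consZ0 (Bw S ++ 2 :: Aw N) (by rw [pad_Bw_head]; decide),
        delBwZ S N,
        consZ1 (Bw N ++ Aw (S+1)) (pad_Bw_head N _),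
        delNoZ (not_mem_app (two_not_mem_Bw N) (two_not_mem_Aw (S+1))),
        delBwZ (S+1) N,
        Bbar_cons (S+1+N), delZ0Aw (S+1+N)]
    simp only [show Abar 0 = ([]:List Ltr) from rfl, wd_nil, one_mul, mul_zero,
      add_zero, mul_neg, mul_one, mul_add, ← mul_assoc, ← wd_append,
      List.append_assoc, List.cons_append, List.nil_append, Nat.zero_add,
      sub_zero, zero_sub, neg_neg]
    rw [Bbar_add, Aw_app]
    simp only [Nat.zero_add]
    rw [show S + 1 + N = S + (1+N) from by omega]
    abel
  · have h5 : (((M+1:ℕ):ℤ) - 1).toNat = M := by omega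
    rw [Foe, if_neg (by omega), h5, hN]
    simp only [ezw, List.append_assoc, List.cons_append, List.nil_append]
    rw [show Abar (S+1) ++ (2:Ltr) :: Aw N = (0:Ltr) :: (Bw S ++ 2 :: Aw N) by
          rw [Abar_succ]; rfl,
        Bbar_cons (S+1+N)]
    rw [delAw_safe (S+1) (Bbar (M+1) ++ 2 :: Aw N) (by rw [pad_Bbar_head]; decide),
        delBbar_z (M+1) (Aw N), delZAw N,
        delAw_z_succ M (Aw (S+1) ++ 2 :: Aw N),
        consZ1 (Aw (S+1) ++ 2 :: Aw N) (pad_Aw_app_head S _),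
        delAw_z_succ S (Aw N), delZAw N,
        delAw_z_succ M ((0:Ltr) :: (Bw S ++ 2 :: Aw N)),
        consZ0 (Bw S ++ 2 :: Aw N) (by rw [pad_Bw_head]; decide),
        delBwZ S N,
        delAw_z_succ M (Bw N ++ Aw (S+1)),
        consZ1 (Bw N ++ Aw (S+1)) (pad_Bw_head N _),
        delNoZ (not_mem_app (two_not_mem_Bw N) (two_not_mem_Aw (S+1))),
        delBwZ (S+1+(M+1)) N,
        delAw_z_succ M ((0:Ltr) :: Aw (S+1+N)),
        delZ0Aw (S+1+N)]
    simp only [mul_zero, add_zero, mul_neg, mul_one, mul_add, ← mul_assoc,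
      ← wd_append, List.append_assoc, List.cons_append, List.nil_append,
      sub_zero, zero_sub, neg_neg]
    rw [Bbar_add (M+1) N, Aw_app (S+1) N,
        show Aw (M+1) ++ (Aw (S+1) ++ (2:Ltr) :: Aw N) = Aw (S+1+M+1) ++ (2:Ltr) :: Aw N
          from by rw [← List.append_assoc, Aw_app,
            show M+1+(S+1) = S+1+M+1 from by omega],
        show Aw (M+1) ++ (Bw N ++ Aw (S+1)) = Bw (M+1+N) ++ Aw (S+1)
          from by rw [← List.append_assoc, Bw_add]]
    abel

end
end
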